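/- arXiv:1904.00262 — 3 statements merged into one kernel-verified Lean document; each statement's English description precedes it below -/
import Mathlib

section
/- (Menas, converse direction) Let ω₁ ⊆ W ⊆ W' be sets and X ⊆ [W]^ω. If the set {x' ∈ [W']^ω : x' ∩ W ∈ X} is stationary in [W']^ω, then X is stationary in [W]^ω. -/
open Set Cardinal

noncomputable def omega1 : Ordinal := (Cardinal.aleph 1).ord

noncomputable def omega2 : Ordinal := (Cardinal.aleph 2).ord

/-- `[W]^ω`: the countable subsets of `W`. -/
def ctble (W : Set Ordinal) : Set (Set Ordinal) := {x | x ⊆ W ∧ x.Countable}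

/-- `Z` is club in `[W]^ω`: `Z ⊆ [W]^ω`, `Z` is `⊆`-cofinal in `[W]^ω`, and `Z` is closed
under unions of `⊆`-increasing `ω`-chains of its elements. -/
def IsClubCtble (W : Set Ordinal) (Z : Set (Set Ordinal)) : Prop :=
  Z ⊆ ctble W ∧
  (∀ x ∈ ctble W, ∃ z ∈ Z, x ⊆ z) ∧
  (∀ c : ℕ → Set Ordinal, (∀ n, c n ∈ Z) → (∀ n, c n ⊆ c (n + 1)) → (⋃ n, c n) ∈ Z)

/-- `X` is stationary in `[W]^ω`: `X` meets every club subset of `[W]^ω`. -/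
def IsStat (W : Set Ordinal) (X : Set (Set Ordinal)) : Prop :=
  ∀ Z, IsClubCtble W Z → (X ∩ Z).Nonempty

/-- `X` is non-stationary in `[W]^ω`: `X` is disjoint from some club subset of `[W]^ω`. -/
def NonStat (W : Set Ordinal) (X : Set (Set Ordinal)) : Prop :=
  ∃ Z, IsClubCtble W Z ∧ X ∩ Z = ∅

theorem stmt4 (W W' : Set Ordinal) (hW : Set.Iio omega1 ⊆ W) (hWW' : W ⊆ W')
    (X : Set (Set Ordinal)) (hX : X ⊆ ctble W)
    (hstat : IsStat W' {x' | x' ∈ ctble W' ∧ x' ∩ W ∈ X}) :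
    IsStat W X := by
  intro Z hZ
  obtain ⟨hZsub, hZcof, hZcl⟩ := hZ
  set Z' : Set (Set Ordinal) := {x' | x' ∈ ctble W' ∧ x' ∩ W ∈ Z} with hZ'def
  have hclub : IsClubCtble W' Z' := by
    refine ⟨fun x hx => hx.1, ?_, ?_⟩
    · intro x hx
      have hxW : x ∩ W ∈ ctble W := ⟨inter_subset_right, hx.2.mono inter_subset_left⟩
      obtain ⟨z, hz, hsub⟩ := hZcof _ hxW
      refine ⟨z ∪ x, ⟨⟨union_subset ((hZsub hz).1.trans hWW') hx.1,
        (hZsub hz).2.union hx.2⟩, ?_⟩, subset_union_right⟩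
      have : (z ∪ x) ∩ W = z := by
        apply subset_antisymm
        · rintro a ⟨ha | ha, haW⟩
          · exact ha
          · exact hsub ⟨ha, haW⟩
        · intro a ha; exact ⟨Or.inl ha, (hZsub hz).1 ha⟩
      rw [this]; exact hz
    · intro c hc hmono
      refine ⟨⟨iUnion_subset fun n => (hc n).1.1, countable_iUnion fun n => (hc n).1.2⟩, ?_⟩
      have : (⋃ n, c n) ∩ W = ⋃ n, c n ∩ W := by rw [iUnion_inter]
      rw [this]
      exact hZcl _ (fun n => (hc n).2) (fun n a ⟨h1, h2⟩ => ⟨hmono n h1, h2⟩)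
  obtain ⟨x', hx'X, hx'Z⟩ := hstat Z' hclub
  exact ⟨x' ∩ W, hx'X.2, hx'Z.2⟩
end

section
/- Let λ ≥ ω₂, for β < λ let π_β : ω₁ → β be a surjection, and let Z be the set of x ∈ [λ]^ω with x ∩ ω₁ ∈ ω₁ and x closed under π_β for all β ∈ x. If R ∈ [λ]^{ω₁} with ω₁ ⊆ R and Z ∩ [R]^ω is ⊆-cofinal in [R]^ω, then R is an ordinal; that is, R = δ for some δ ∈ [ω₁, λ). -/
open Set Cardinal

theorem stmt13 (L : Ordinal) (hL : omega2 ≤ L)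
    (π : Ordinal → Ordinal → Ordinal)
    (hπ : ∀ β, 1 ≤ β → β < L →
      (∀ ξ, ξ < omega1 → π β ξ < β) ∧ (∀ γ, γ < β → ∃ ξ, ξ < omega1 ∧ π β ξ = γ))
    (Z : Set (Set Ordinal))
    (hZ : Z = {x | x ∈ ctble (Set.Iio L) ∧
        (∃ η, η < omega1 ∧ x ∩ Set.Iio omega1 = Set.Iio η) ∧
        (∀ β ∈ x, 1 ≤ β → ∀ ξ ∈ x, ξ < omega1 → π β ξ ∈ x)})
    (R : Set Ordinal) (hR1 : R ⊆ Set.Iio L) (hR2 : Set.Iio omega1 ⊆ R)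
    (hR3 : Cardinal.mk R = Cardinal.aleph 1)
    (hcof : ∀ x ∈ ctble R, ∃ z ∈ Z, z ⊆ R ∧ x ⊆ z) :
    ∃ δ, omega1 ≤ δ ∧ δ < L ∧ R = Set.Iio δ := by
  -- R is transitive
  have htrans : ∀ β ∈ R, ∀ γ < β, γ ∈ R := by
    intro β hβ γ hγ
    have hβ1 : 1 ≤ β := Order.one_le_iff_pos.2 (lt_of_le_of_lt (zero_le (a := γ)) hγ)
    obtain ⟨ξ, hξ1, hξ2⟩ := (hπ β hβ1 (hR1 hβ)).2 γ hγ
    have hξR : ξ ∈ R := hR2 hξ1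
    obtain ⟨z, hzZ, hzR, hxz⟩ := hcof {β, ξ} ⟨by
      intro a ha; rcases ha with rfl | rfl; exacts [hβ, hξR],
      (Set.countable_singleton ξ).insert β⟩
    rw [hZ] at hzZ
    have := hzZ.2.2 β (hxz (by simp)) hβ1 ξ (hxz (by simp)) hξ1
    rw [hξ2] at this
    exact hzR this
  -- δ := least ordinal not in R
  have hne : Rᶜ.Nonempty := ⟨L, fun h => lt_irrefl L (hR1 h)⟩
  set δ := sInf Rᶜ with hδ
  have hδmem : δ ∈ Rᶜ := csInf_mem hne
  have hReq : R = Set.Iio δ := by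
    ext γ
    constructor
    · intro hγ
      by_contra h
      have hle : δ ≤ γ := not_lt.1 h
      rcases eq_or_lt_of_le hle with rfl | hlt
      · exact hδmem hγ
      · exact hδmem (htrans γ hγ δ hlt)
    · intro hγ
      by_contra h
      exact absurd (csInf_le' (show γ ∈ Rᶜ from h)) (not_le.2 hγ)
  have hω1 : omega1 ≤ δ := by
    by_contra h
    exact hδmem (hR2 (not_le.1 h))
  refine ⟨δ, hω1, ?_, hReq⟩
  have hδL : δ ≤ L := by
    by_contra h
    have : L ∈ Set.Iio δ := not_le.1 h
    exact lt_irrefl L (hR1 (hReq ▸ this))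
  rcases lt_or_eq_of_le hδL with h | rfl
  · exact h
  · exfalso
    have hsub : Set.Iio omega2 ⊆ R := by
      rw [hReq]; exact fun a ha => ha.trans_le hL
    have h1 : Cardinal.mk (Set.Iio omega2) ≤ Cardinal.mk R := Cardinal.mk_le_mk_of_subset hsub
    rw [hR3, Ordinal.mk_Iio_ordinal, omega2, Cardinal.card_ord] at h1
    have h2 : Cardinal.lift (Cardinal.aleph 2) = Cardinal.aleph (Ordinal.lift 2) :=
      Cardinal.lift_aleph 2
    rw [h2] at h1
    simp only [Ordinal.lift_ofNat] at h1
    exact absurd h1 (not_le.2 (Cardinal.aleph_lt_aleph.2 (by norm_num)))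
end

section
/- Assume DRP at [ω₂]^ω: for any sequence ⟨X_α : α < ω₂⟩ of stationary subsets of [ω₂]^ω there is R ∈ [ω₂]^{ω₁} with ω₁ ⊆ R such that X_α ∩ [R]^ω is stationary in [R]^ω for all α ∈ R. Then for any sequence ⟨X_α : α < ω₂⟩ of stationary subsets of [ω₂]^ω there is an ordinal δ with ω₁ ≤ δ < ω₂ such that X_α ∩ [δ]^ω is stationary in [δ]^ω for all α < δ. -/
open Set Cardinal

theorem club_above (W a : Set Ordinal) (ha : a ∈ ctble W) :
    IsClubCtble W {x | x ∈ ctble W ∧ a ⊆ x} := by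
  refine ⟨fun x hx => hx.1, fun x hx => ⟨x ∪ a, ⟨⟨union_subset hx.1 ha.1,
    hx.2.union ha.2⟩, subset_union_right⟩, subset_union_left⟩, ?_⟩
  intro c hc _
  exact ⟨⟨iUnion_subset fun n => (hc n).1.1, countable_iUnion fun n => (hc n).1.2⟩,
    (hc 0).2.trans (subset_iUnion c 0)⟩

theorem stat_mono {W : Set Ordinal} {X Y : Set (Set Ordinal)} (hXY : X ⊆ Y)
    (hX : IsStat W X) : IsStat W Y := fun Z hZ =>
  (hX Z hZ).mono (inter_subset_inter_left _ hXY)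

theorem club_inter {W : Set Ordinal} {Z₁ Z₂ : Set (Set Ordinal)}
    (h₁ : IsClubCtble W Z₁) (h₂ : IsClubCtble W Z₂) : IsClubCtble W (Z₁ ∩ Z₂) := by
  classical
  refine ⟨fun x hx => h₁.1 hx.1, ?_, ?_⟩
  · intro x hx
    have step : ∀ (n : ℕ) (y : Set Ordinal), y ∈ ctble W →
        ∃ z, z ∈ ctble W ∧ z ∈ (if n % 2 = 0 then Z₁ else Z₂) ∧ y ⊆ z := by
      intro n y hy
      by_cases h : n % 2 = 0
      · obtain ⟨z, hz, hyz⟩ := h₁.2.1 y hy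
        exact ⟨z, h₁.1 hz, by simp [h, hz], hyz⟩
      · obtain ⟨z, hz, hyz⟩ := h₂.2.1 y hy
        exact ⟨z, h₂.1 hz, by simp [h, hz], hyz⟩
    choose F hFct hFmem hFsub using step
    let c : ℕ → {y : Set Ordinal // y ∈ ctble W} := fun n =>
      Nat.rec ⟨F 0 x hx, hFct 0 x hx⟩ (fun n ih => ⟨F (n+1) ih.1 ih.2, hFct (n+1) ih.1 ih.2⟩) n
    have hc0 : x ⊆ (c 0).1 := hFsub 0 x hx
    have hcmem : ∀ n, (c n).1 ∈ (if n % 2 = 0 then Z₁ else Z₂) := by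
      intro n
      cases n with
      | zero => exact hFmem 0 x hx
      | succ m => exact hFmem (m+1) (c m).1 (c m).2
    have hcsub : ∀ n, (c n).1 ⊆ (c (n+1)).1 := fun n =>
      hFsub (n+1) (c n).1 (c n).2
    have hmono : ∀ m n, m ≤ n → (c m).1 ⊆ (c n).1 := by
      intro m n hmn
      induction n with
      | zero => cases Nat.le_zero.mp hmn; exact subset_rfl
      | succ k ih =>
        rcases Nat.lt_or_ge m (k+1) with h | h
        · exact (ih (Nat.lt_succ_iff.mp h)).trans (hcsub k)
        · cases Nat.le_antisymm hmn h; exact subset_rfl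
    set z : Set Ordinal := ⋃ n, (c n).1 with hz
    have hcover : ∀ n, (c n).1 ⊆ z := fun n => subset_iUnion (fun n => (c n).1) n
    have hzeq1 : z = ⋃ k, (c (2 * k)).1 := by
      apply subset_antisymm
      · exact iUnion_subset fun n => (hmono n (2*n) (by omega)).trans
          (subset_iUnion (fun k => (c (2*k)).1) n)
      · exact iUnion_subset fun k => hcover (2*k)
    have hzeq2 : z = ⋃ k, (c (2 * k + 1)).1 := by
      apply subset_antisymm
      · exact iUnion_subset fun n => (hmono n (2*n+1) (by omega)).trans
          (subset_iUnion (fun k => (c (2*k+1)).1) n)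
      · exact iUnion_subset fun k => hcover (2*k+1)
    refine ⟨z, ⟨?_, ?_⟩, hc0.trans (hcover 0)⟩
    · rw [hzeq1]
      refine h₁.2.2 _ (fun k => ?_) (fun k => hmono (2*k) (2*(k+1)) (by omega))
      have := hcmem (2*k); simpa using this
    · rw [hzeq2]
      refine h₂.2.2 _ (fun k => ?_) (fun k => hmono (2*k+1) (2*(k+1)+1) (by omega))
      have := hcmem (2*k+1)
      have h : ¬ (2*k+1) % 2 = 0 := by omega
      rwa [if_neg h] at this
  · intro c hc hmono
    exact ⟨h₁.2.2 c (fun n => (hc n).1) hmono, h₂.2.2 c (fun n => (hc n).2) hmono⟩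

theorem stat_inter_club {W : Set Ordinal} {X Z : Set (Set Ordinal)}
    (hX : IsStat W X) (hZ : IsClubCtble W Z) : IsStat W (X ∩ Z) := by
  intro Z' hZ'
  obtain ⟨x, hx1, hx2, hx3⟩ := hX _ (club_inter hZ hZ')
  exact ⟨x, ⟨hx1, hx2⟩, hx3⟩

theorem Zpi_club (π : Ordinal → Ordinal → Ordinal)
    (hπ : ∀ β, β < omega2 → (∀ ξ, π β ξ < omega2)) :
    IsClubCtble (Iio omega2)
      {x | x ∈ ctble (Iio omega2) ∧ ∀ β ∈ x, ∀ ξ ∈ x, π β ξ ∈ x} := by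
  refine ⟨fun x hx => hx.1, ?_, ?_⟩
  · intro x hx
    let c : ℕ → Set Ordinal := fun n =>
      Nat.rec x (fun _ y => y ∪ image2 π y y) n
    have hsub : ∀ n, c n ⊆ c (n+1) := fun n => subset_union_left
    have hmono : Monotone c := monotone_nat_of_le_succ hsub
    have hct : ∀ n, (c n).Countable := by
      intro n
      induction n with
      | zero => exact hx.2
      | succ m ih => exact ih.union (ih.image2 ih π)
    have hW : ∀ n, c n ⊆ Iio omega2 := by
      intro n
      induction n with
      | zero => exact hx.1
      | succ m ih =>
        refine union_subset ih ?_
        rintro γ ⟨β, hβ, ξ, hξ, rfl⟩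
        exact hπ β (ih hβ) ξ
    refine ⟨⋃ n, c n, ⟨⟨iUnion_subset hW, countable_iUnion hct⟩, ?_⟩,
      subset_iUnion c 0⟩
    rintro β hβ ξ hξ
    obtain ⟨m, hm⟩ := mem_iUnion.mp hβ
    obtain ⟨n, hn⟩ := mem_iUnion.mp hξ
    have hβ' : β ∈ c (max m n) := hmono (le_max_left m n) hm
    have hξ' : ξ ∈ c (max m n) := hmono (le_max_right m n) hn
    have : π β ξ ∈ c (max m n + 1) := Or.inr (mem_image2_of_mem hβ' hξ')
    exact mem_iUnion.mpr ⟨max m n + 1, this⟩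
  · intro c hc hmono'
    have hmono : Monotone c := monotone_nat_of_le_succ hmono'
    refine ⟨⟨iUnion_subset fun n => (hc n).1.1, countable_iUnion fun n => (hc n).1.2⟩, ?_⟩
    intro β hβ ξ hξ
    obtain ⟨m, hm⟩ := mem_iUnion.mp hβ
    obtain ⟨n, hn⟩ := mem_iUnion.mp hξ
    have := (hc (max m n)).2 β (hmono (le_max_left m n) hm) ξ (hmono (le_max_right m n) hn)
    exact mem_iUnion.mpr ⟨max m n, this⟩
universe u

theorem exists_pi : ∃ π : Ordinal.{u} → Ordinal.{u} → Ordinal.{u},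
    ∀ β, β < omega2 → (∀ ξ, π β ξ < omega2) ∧ ∀ γ < β, ∃ ξ < omega1, π β ξ = γ := by
  have key : ∀ β : Ordinal.{u}, β < omega2 → ∃ p : Ordinal.{u} → Ordinal.{u},
      (∀ ξ, p ξ < omega2) ∧ ∀ γ < β, ∃ ξ < omega1, p ξ = γ := by
    intro β hβ
    rcases eq_or_ne β 0 with rfl | h0
    · exact ⟨fun _ => 0, fun _ => hβ, fun γ hγ => absurd hγ (show (0:Ordinal) ≤ γ from zero_le).not_gt⟩
    · have hne : Nonempty (Iio β) := ⟨⟨0, pos_iff_ne_zero.mpr h0⟩⟩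
      have hs : (aleph 2 : Cardinal) = Order.succ (aleph 1) := by
        rw [← Cardinal.aleph_succ]; norm_num
      have hcard : #(Iio β) ≤ #(Iio omega1) := by
        rw [Ordinal.mk_Iio_ordinal, Ordinal.mk_Iio_ordinal]
        apply Cardinal.lift_le.mpr
        have h1 : β.card < aleph 2 := Cardinal.lt_ord.mp hβ
        rw [hs, Order.lt_succ_iff] at h1
        rwa [omega1, Cardinal.card_ord]
      obtain ⟨f⟩ := Cardinal.le_def _ _ |>.mp hcard
      classical
      have hsurj : Function.Surjective (Function.invFun f) :=
        Function.invFun_surjective f.injective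
      refine ⟨fun ξ => if h : ξ < omega1 then (Function.invFun f ⟨ξ, h⟩ : Iio β).1 else 0,
        ?_, ?_⟩
      · intro ξ
        by_cases h : ξ < omega1
        · simp only [dif_pos h]; exact (Function.invFun f _).2.trans hβ
        · simp only [dif_neg h]
          exact lt_of_le_of_lt (show (0:Ordinal) ≤ _ from zero_le) ((pos_iff_ne_zero.mpr h0).trans hβ)
      · intro γ hγ
        obtain ⟨ξ, hξ⟩ := hsurj ⟨γ, hγ⟩
        refine ⟨ξ.1, ξ.2, ?_⟩
        have : (⟨ξ.1, ξ.2⟩ : Iio omega1) = ξ := rfl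
        simp only [this, hξ]; exact dif_pos ξ.2
  choose p hp using key
  classical
  exact ⟨fun β => if h : β < omega2 then p β h else fun _ => 0, fun β hβ => by
    simp only [dif_pos hβ]; exact hp β hβ⟩
theorem main_core.{w}
    (DRP : ∀ X : Ordinal.{w} → Set (Set Ordinal.{w}),
      (∀ α, α < omega2 → X α ⊆ ctble (Set.Iio omega2) ∧
        IsStat (Set.Iio omega2) (X α)) →
      ∃ R : Set Ordinal, R ⊆ Set.Iio omega2 ∧ Set.Iio omega1 ⊆ R ∧
        Cardinal.mk R = Cardinal.aleph 1 ∧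
        ∀ α ∈ R, IsStat R (X α ∩ {x | x ⊆ R}))
    (X : Ordinal.{w} → Set (Set Ordinal.{w}))
    (hX : ∀ α, α < omega2 → X α ⊆ ctble (Set.Iio omega2) ∧
      IsStat (Set.Iio omega2) (X α)) :
    ∃ δ : Ordinal.{w}, omega1 ≤ δ ∧ δ < omega2 ∧
      ∀ α, α < δ → IsStat (Set.Iio δ) (X α ∩ {x | x ⊆ Set.Iio δ}) := by
  obtain ⟨π, hπ, -⟩ : ∃ π : Ordinal → Ordinal → Ordinal,
      (∀ β, β < omega2 → (∀ ξ, π β ξ < omega2) ∧ ∀ γ < β, ∃ ξ < omega1, π β ξ = γ) ∧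
      X (π 0 0) = X (π 0 0) := by
    obtain ⟨p, hp⟩ := exists_pi
    exact ⟨p, hp, rfl⟩
  set Z : Set (Set Ordinal) :=
    {x | x ∈ ctble (Iio omega2) ∧ ∀ β ∈ x, ∀ ξ ∈ x, π β ξ ∈ x} with hZdef
  have hZclub : IsClubCtble (Iio omega2) Z := Zpi_club π (fun β hβ _ => ((hπ β hβ).1 _))
  set X' : Ordinal → Set (Set Ordinal) := fun α => X α ∩ Z with hX'def
  have hX' : ∀ α, α < omega2 → X' α ⊆ ctble (Iio omega2) ∧ IsStat (Iio omega2) (X' α) :=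
    fun α hα => ⟨(inter_subset_left).trans (hX α hα).1,
      stat_inter_club (hX α hα).2 hZclub⟩
  obtain ⟨R, hRsub, hRω₁, hRcard, hRstat⟩ := DRP X' hX'
  have hω₁pos : (0 : Ordinal) < omega1 := by
    rw [omega1, Cardinal.lt_ord]
    simpa using Cardinal.aleph_pos 1
  have h0R : (0 : Ordinal) ∈ R := hRω₁ hω₁pos
  -- R is downward closed
  have hdc : ∀ β ∈ R, ∀ γ, γ < β → γ ∈ R := by
    intro β hβR γ hγ
    obtain ⟨ξ, hξω, hπξ⟩ := (hπ β (hRsub hβR)).2 γ hγ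
    have hξR : ξ ∈ R := hRω₁ hξω
    have hab : ({β, ξ} : Set Ordinal) ∈ ctble R :=
      ⟨by rintro o (rfl | rfl); exacts [hβR, hξR], (Set.countable_insert.mpr (countable_singleton ξ))⟩
    have hab' : ({β, ξ} : Set Ordinal) ∈ ctble R := hab
    obtain ⟨x, ⟨⟨hxX, hxZ⟩, hxR⟩, ⟨_, habx⟩⟩ :=
      hRstat 0 h0R _ (club_above R {β, ξ} hab)
    have hβx : β ∈ x := habx (by simp)
    have hξx : ξ ∈ x := habx (by simp)
    have := hxZ.2 β hβx ξ hξx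
    rw [hπξ] at this
    exact hxR this
  -- δ
  have hω₂nR : omega2 ∉ R := fun h => lt_irrefl _ (mem_Iio.mp (hRsub h))
  set δ : Ordinal := sInf {o | o ∉ R} with hδdef
  have hδnR : δ ∉ R := by
    have h := csInf_mem (s := {o : Ordinal | o ∉ R}) ⟨omega2, hω₂nR⟩
    rw [← hδdef] at h
    exact h
  have hReq : R = Iio δ := by
    ext γ
    constructor
    · intro hγR
      by_contra h
      have h2 : δ ≤ γ := not_lt.mp (fun hh => h (mem_Iio.mpr hh))
      rcases eq_or_lt_of_le h2 with rfl | h'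
      · exact hδnR hγR
      · exact hδnR (hdc γ hγR δ h')
    · intro hγ
      by_contra h
      exact absurd (csInf_le' (s := {o | o ∉ R}) h) (not_le_of_gt (mem_Iio.mp hγ))
  have hω₁δ : omega1 ≤ δ := by
    by_contra h
    push_neg at h
    have hh : δ ∈ R := hRω₁ h
    rw [hReq] at hh
    exact lt_irrefl _ (mem_Iio.mp hh)
  have hδω₂ : δ < omega2 := by
    rcases lt_or_ge δ omega2 with h | h
    · exact h
    · exfalso
      have : R = Iio omega2 := by
        apply subset_antisymm hRsub
        rw [hReq]; exact fun o ho => lt_of_lt_of_le ho h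
      rw [this, Ordinal.mk_Iio_ordinal, omega2, Cardinal.card_ord] at hRcard
      have h2 : Cardinal.lift (aleph 2) = aleph (Ordinal.lift 2) := Cardinal.lift_aleph 2
      rw [h2] at hRcard
      have : (Ordinal.lift 2 : Ordinal) = 2 := by simp
      rw [this] at hRcard
      exact absurd hRcard (ne_of_gt (Cardinal.aleph_lt_aleph.mpr one_lt_two))
  refine ⟨δ, hω₁δ, hδω₂, ?_⟩
  intro α hα
  have hαR : α ∈ R := by rw [hReq]; exact hα
  have := hRstat α hαR
  rw [hReq] at this
  refine stat_mono ?_ this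
  intro x hx
  exact ⟨hx.1.1, hx.2⟩

universe a b

theorem stat_transfer {g : Ordinal.{a} → Ordinal.{b}} {W : Set Ordinal.{a}}
    {X : Set (Set Ordinal.{a})} (hinj : InjOn g W) (hX : IsStat W X) :
    IsStat (g '' W) ((fun x => g '' x) '' (X ∩ ctble W)) := by
  intro Z' hZ'
  set Z : Set (Set Ordinal.{a}) := {x | x ∈ ctble W ∧ g '' x ∈ Z'} with hZdef
  have hZclub : IsClubCtble W Z := by
    refine ⟨fun x hx => hx.1, ?_, ?_⟩
    · intro x hx
      have hgx : g '' x ∈ ctble (g '' W) := ⟨image_mono hx.1, hx.2.image g⟩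
      obtain ⟨z', hz'Z', hsub⟩ := hZ'.2.1 _ hgx
      set z : Set Ordinal.{a} := {o | o ∈ W ∧ g o ∈ z'} with hzdef
      have hzW : z ⊆ W := fun o ho => ho.1
      have hz'ct : z'.Countable := (hZ'.1 hz'Z').2
      have hzct : z.Countable := by
        have hc' : Countable z' := hz'ct.to_subtype
        have hc : Countable z := Function.Injective.countable
          (f := fun o : z => (⟨g o.1, o.2.2⟩ : z'))
          (fun o o' h => Subtype.ext (hinj o.2.1 o'.2.1 (congrArg Subtype.val h)))
        exact Set.countable_coe_iff.mp hc
      have hgz : g '' z = z' := by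
        apply subset_antisymm
        · rintro y ⟨o, ho, rfl⟩; exact ho.2
        · intro y hy
          obtain ⟨o, hoW, rfl⟩ := (hZ'.1 hz'Z').1 hy
          exact ⟨o, ⟨hoW, hy⟩, rfl⟩
      refine ⟨z, ⟨⟨hzW, hzct⟩, by rwa [hgz]⟩, ?_⟩
      intro o ho
      exact ⟨hx.1 ho, hsub ⟨o, ho, rfl⟩⟩
    · intro c hc hmono
      refine ⟨⟨iUnion_subset fun n => (hc n).1.1, countable_iUnion fun n => (hc n).1.2⟩, ?_⟩
      rw [image_iUnion]
      exact hZ'.2.2 _ (fun n => (hc n).2) (fun n => image_mono (hmono n))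
  obtain ⟨x, hxX, hxZ⟩ := hX Z hZclub
  exact ⟨g '' x, ⟨x, ⟨hxX, hxZ.1⟩, rfl⟩, hxZ.2⟩

theorem lift_omega1 : Ordinal.lift.{a,b} omega1 = omega1 := by
  rw [omega1, Cardinal.lift_ord, Cardinal.lift_aleph, Ordinal.lift_one]; rfl

theorem lift_omega2 : Ordinal.lift.{a,b} omega2 = omega2 := by
  rw [omega2, Cardinal.lift_ord, Cardinal.lift_aleph, Ordinal.lift_ofNat]; rfl


theorem stmt14_aux.{u2, u1}
    (DRP : ∀ X : Ordinal.{u1} → Set (Set Ordinal.{u1}),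
      (∀ α, α < omega2 → X α ⊆ ctble (Set.Iio omega2) ∧
        IsStat (Set.Iio omega2) (X α)) →
      ∃ R : Set Ordinal.{u1}, R ⊆ Set.Iio omega2 ∧ Set.Iio omega1 ⊆ R ∧
        Cardinal.mk R = Cardinal.aleph 1 ∧
        ∀ α ∈ R, IsStat R (X α ∩ {x | x ⊆ R}))
    (X : Ordinal.{u2} → Set (Set Ordinal.{u2}))
    (hX : ∀ α, α < omega2 → X α ⊆ ctble (Set.Iio omega2) ∧
      IsStat (Set.Iio omega2) (X α)) :
    ∃ δ : Ordinal.{u2}, omega1 ≤ δ ∧ δ < omega2 ∧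
      ∀ α, α < δ → IsStat (Set.Iio δ) (X α ∩ {x | x ⊆ Set.Iio δ}) := by
  classical
  have hl2 : Ordinal.lift.{u1,u2} omega2 = Ordinal.lift.{u2,u1} omega2 := by
    rw [lift_omega2, lift_omega2]
  have hl1 : Ordinal.lift.{u1,u2} omega1 = Ordinal.lift.{u2,u1} omega1 := by
    rw [lift_omega1, lift_omega1]
  have hgex : ∀ o : Ordinal.{u2}, o < omega2 →
      ∃ o' : Ordinal.{u1}, Ordinal.lift.{u2} o' = Ordinal.lift.{u1} o :=
    fun o ho => Ordinal.mem_range_lift_of_le (le_of_lt (by rw [← hl2]; exact Ordinal.lift_lt.mpr ho))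
  have hiex : ∀ o : Ordinal.{u1}, o < omega2 →
      ∃ o' : Ordinal.{u2}, Ordinal.lift.{u1} o' = Ordinal.lift.{u2} o :=
    fun o ho => Ordinal.mem_range_lift_of_le (le_of_lt (by rw [hl2]; exact Ordinal.lift_lt.mpr ho))
  set g : Ordinal.{u2} → Ordinal.{u1} :=
    fun o => if h : o < omega2 then (hgex o h).choose else 0 with hgdef
  set gi : Ordinal.{u1} → Ordinal.{u2} :=
    fun o => if h : o < omega2 then (hiex o h).choose else 0 with hgidef
  have hg : ∀ o, o < omega2 → Ordinal.lift.{u2} (g o) = Ordinal.lift.{u1} o := by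
    intro o ho
    have : g o = (hgex o ho).choose := by rw [hgdef]; simp only [dif_pos ho]
    rw [this]; exact (hgex o ho).choose_spec
  have hgi : ∀ o, o < omega2 → Ordinal.lift.{u1} (gi o) = Ordinal.lift.{u2} o := by
    intro o ho
    have : gi o = (hiex o ho).choose := by rw [hgidef]; simp only [dif_pos ho]
    rw [this]; exact (hiex o ho).choose_spec
  have hgω₂ : ∀ o, o < omega2 → g o < omega2 := by
    intro o ho
    have h2 : Ordinal.lift.{u2} (g o) < Ordinal.lift.{u2} omega2 := by
      rw [hg o ho, ← hl2]; exact Ordinal.lift_lt.mpr ho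
    exact Ordinal.lift_lt.mp h2
  have hiω₂ : ∀ o, o < omega2 → gi o < omega2 := by
    intro o ho
    have h2 : Ordinal.lift.{u1} (gi o) < Ordinal.lift.{u1} omega2 := by
      rw [hgi o ho, hl2]; exact Ordinal.lift_lt.mpr ho
    exact Ordinal.lift_lt.mp h2
  have hgig : ∀ o, o < omega2 → gi (g o) = o := by
    intro o ho
    have : Ordinal.lift.{u1} (gi (g o)) = Ordinal.lift.{u1} o := by
      rw [hgi _ (hgω₂ o ho), hg o ho]
    exact Ordinal.lift_inj.mp this
  have hggi : ∀ o, o < omega2 → g (gi o) = o := by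
    intro o ho
    have : Ordinal.lift.{u2} (g (gi o)) = Ordinal.lift.{u2} o := by
      rw [hg _ (hiω₂ o ho), hgi o ho]
    exact Ordinal.lift_inj.mp this
  have hglt : ∀ o o', o < omega2 → o' < omega2 → (g o < g o' ↔ o < o') := by
    intro o o' ho ho'
    rw [← Ordinal.lift_lt.{u2}, hg o ho, hg o' ho', Ordinal.lift_lt]
  have hilt : ∀ o o', o < omega2 → o' < omega2 → (gi o < gi o' ↔ o < o') := by
    intro o o' ho ho'
    rw [← Ordinal.lift_lt.{u1}, hgi o ho, hgi o' ho', Ordinal.lift_lt]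
  have hgω₁ : ∀ o, o < omega2 → (g o < omega1 ↔ o < omega1) := by
    intro o ho
    rw [← Ordinal.lift_lt.{u2} (a := g o), hg o ho, ← hl1, Ordinal.lift_lt]
  have hginj : InjOn g (Iio omega2) := by
    intro o ho o' ho' h
    have : Ordinal.lift.{u1} o = Ordinal.lift.{u1} o' := by
      rw [← hg o ho, ← hg o' ho', h]
    exact Ordinal.lift_inj.mp this
  have hgimage : g '' (Iio omega2) = Iio omega2 := by
    apply subset_antisymm
    · rintro _ ⟨o, ho, rfl⟩; exact hgω₂ o ho
    · intro o₁ ho₁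
      exact ⟨gi o₁, hiω₂ o₁ ho₁, hggi o₁ ho₁⟩
  -- the transferred sequence
  set X₁ : Ordinal.{u1} → Set (Set Ordinal.{u1}) :=
    fun α => (fun x => g '' x) '' (X (gi α) ∩ ctble (Set.Iio omega2)) with hX₁def
  have hX₁ : ∀ α, α < omega2 → X₁ α ⊆ ctble (Set.Iio omega2) ∧
      IsStat (Set.Iio omega2) (X₁ α) := by
    intro α hα
    constructor
    · rintro _ ⟨x, ⟨_, hxc⟩, rfl⟩
      exact ⟨fun _ ⟨o, ho, e⟩ => e ▸ hgω₂ o (hxc.1 ho), hxc.2.image g⟩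
    · have hst := stat_transfer hginj (hX (gi α) (hiω₂ α hα)).2
      rwa [hgimage] at hst
  obtain ⟨δ₁, hδ₁ω₁, hδ₁ω₂, hδ₁stat⟩ := main_core DRP X₁ hX₁
  set δ : Ordinal.{u2} := gi δ₁ with hδdef
  have hδω₂ : δ < omega2 := hiω₂ δ₁ hδ₁ω₂
  have hgδ : g δ = δ₁ := hggi δ₁ hδ₁ω₂
  have hδω₁ : omega1 ≤ δ := by
    by_contra h
    push_neg at h
    have : g δ < omega1 := (hgω₁ δ hδω₂).mpr h
    rw [hgδ] at this
    exact absurd hδ₁ω₁ (not_le_of_gt this)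
  refine ⟨δ, hδω₁, hδω₂, ?_⟩
  intro α hα
  have hαω₂ : α < omega2 := hα.trans hδω₂
  have hgα : g α < δ₁ := by
    rw [← hgδ]; exact (hglt α δ hαω₂ hδω₂).mpr hα
  have hst₁ := hδ₁stat (g α) hgα
  -- transfer back with gi on Iio δ₁
  have hiinj : InjOn gi (Iio δ₁) := by
    intro o ho o' ho' h
    have ho2 : o < omega2 := lt_trans ho hδ₁ω₂
    have ho2' : o' < omega2 := lt_trans ho' hδ₁ω₂
    have : Ordinal.lift.{u2} o = Ordinal.lift.{u2} o' := by
      rw [← hgi o ho2, ← hgi o' ho2', h]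
    exact Ordinal.lift_inj.mp this
  have hiimage : gi '' (Iio δ₁) = Iio δ := by
    apply subset_antisymm
    · rintro _ ⟨o, ho, rfl⟩
      rw [hδdef]
      exact (hilt o δ₁ (lt_trans ho hδ₁ω₂) hδ₁ω₂).mpr ho
    · intro γ hγ
      have hγω₂ : γ < omega2 := lt_trans hγ hδω₂
      refine ⟨g γ, ?_, hgig γ hγω₂⟩
      rw [← hgδ]
      exact (hglt γ δ hγω₂ hδω₂).mpr hγ
  have hst₂ := stat_transfer hiinj hst₁
  rw [hiimage] at hst₂
  refine stat_mono ?_ hst₂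
  rintro _ ⟨x, ⟨⟨hxX₁, hxδ₁⟩, hxct⟩, rfl⟩
  obtain ⟨x₀, ⟨hx₀X, hx₀W, hx₀ct⟩, rfl⟩ := hxX₁
  have hgiα : gi (g α) = α := hgig α hαω₂
  rw [hgiα] at hx₀X
  have hgix : gi '' (g '' x₀) = x₀ := by
    rw [← image_comp]
    apply subset_antisymm
    · rintro _ ⟨o, ho, rfl⟩
      simp only [Function.comp_apply]
      rw [hgig o (hx₀W ho)]
      exact ho
    · intro o ho
      exact ⟨o, ho, by simp only [Function.comp_apply]; rw [hgig o (hx₀W ho)]⟩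
  show gi '' (g '' x₀) ∈ X α ∩ {x | x ⊆ Iio δ}
  rw [hgix]
  refine ⟨hx₀X, ?_⟩
  intro o ho
  have : g o ∈ g '' x₀ := mem_image_of_mem g ho
  have h1 : g o < δ₁ := hxδ₁ this
  have h2 : gi (g o) < gi δ₁ := (hilt _ _ (lt_trans h1 hδ₁ω₂) hδ₁ω₂).mpr h1
  rwa [hgig o (hx₀W ho)] at h2

theorem stmt14
    (DRP : ∀ X : Ordinal → Set (Set Ordinal),
      (∀ α, α < omega2 → X α ⊆ ctble (Set.Iio omega2) ∧
        IsStat (Set.Iio omega2) (X α)) →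
      ∃ R : Set Ordinal, R ⊆ Set.Iio omega2 ∧ Set.Iio omega1 ⊆ R ∧
        Cardinal.mk R = Cardinal.aleph 1 ∧
        ∀ α ∈ R, IsStat R (X α ∩ {x | x ⊆ R}))
    (X : Ordinal → Set (Set Ordinal))
    (hX : ∀ α, α < omega2 → X α ⊆ ctble (Set.Iio omega2) ∧
      IsStat (Set.Iio omega2) (X α)) :
    ∃ δ, omega1 ≤ δ ∧ δ < omega2 ∧
      ∀ α, α < δ → IsStat (Set.Iio δ) (X α ∩ {x | x ⊆ Set.Iio δ}) :=
  stmt14_aux DRP X hX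
end
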